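/- Let z ∈ ℂ with 0 < Re z < 1. For r > 0 set A_l(r) = ∫_{φ = -π/4}^{3π/4} f_l(r·exp(iφ))·(i·r·exp(iφ)) dφ, the integral of f_l along the circular arc of radius r centered at the origin between angles -π/4 and 3π/4. Then r^(Re z)·‖A_l(r)‖ tends to ‖exp(iπz/4) - exp(-3iπz/4)‖/(2π·‖z‖) as r → 0⁺, and this limit is positive (since exp(iπz) ≠ 1 for 0 < Re z < 1); so the arc integral diverges like r^(-Re z) as r → 0. -/

import Mathlib

open Filter

/-- The left integrand `f_l(w) = w^(-z)·exp(-πi w²)/(exp(πi w) - exp(-πi w))`. -/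
noncomputable def fl (z w : ℂ) : ℂ :=
  w ^ (-z) * Complex.exp (-(Real.pi * Complex.I) * w ^ 2) /
    (Complex.exp (Real.pi * Complex.I * w) - Complex.exp (-(Real.pi * Complex.I) * w))

/-- The integral of `f_l` along the circular arc of radius `r` centered at the
origin between angles `-π/4` and `3π/4`. -/
noncomputable def arcL (z : ℂ) (r : ℝ) : ℂ :=
  ∫ φ in (-(Real.pi / 4))..(3 * Real.pi / 4),
    fl z (r * Complex.exp (φ * Complex.I)) * (Complex.I * r * Complex.exp (φ * Complex.I))

open Complex Set in
/-- Regularized version of `w / (exp(2πi w) - 1)`. -/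
noncomputable def Jfun : ℂ → ℂ := fun w =>
  if w = 0 then (2 * Real.pi * Complex.I)⁻¹
  else w / (Complex.exp (2 * Real.pi * Complex.I * w) - 1)

/-- `w·f_l(w)/w^(-z)`, regularized at `0`. -/
noncomputable def Efun : ℂ → ℂ := fun w =>
  Complex.exp (-(Real.pi * Complex.I) * w ^ 2) * Complex.exp (Real.pi * Complex.I * w) * Jfun w

/-- Renormalized integrand. -/
noncomputable def Kf (z : ℂ) (r φ : ℝ) : ℂ :=
  Complex.exp (-(Complex.I * z) * φ) * Complex.I * Efun (r * Complex.exp (φ * Complex.I))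

section aux
open Complex Set

lemma twoPiI_ne : (2 * (Real.pi : ℂ) * Complex.I) ≠ 0 := by
  simp [Real.pi_ne_zero, Complex.I_ne_zero, Complex.ofReal_ne_zero]

lemma exp_ne_one' {w : ℂ} (hw : w ≠ 0) (hw1 : ‖w‖ < 1) :
    Complex.exp (2 * Real.pi * Complex.I * w) ≠ 1 := by
  intro h
  rw [Complex.exp_eq_one_iff] at h
  obtain ⟨n, hn⟩ := h
  have hwn : w = (n : ℂ) := by
    have h2 : (2 * (Real.pi:ℂ) * Complex.I) * w = (2 * (Real.pi:ℂ) * Complex.I) * n := by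
      rw [hn]; ring
    exact mul_left_cancel₀ twoPiI_ne h2
  have hn0 : n ≠ 0 := by rintro rfl; simp at hwn; exact hw hwn
  have h1 : (1:ℝ) ≤ ‖w‖ := by
    rw [hwn]
    have := Int.one_le_abs hn0
    calc (1:ℝ) ≤ |(n:ℝ)| := by exact_mod_cast this
    _ = ‖(n:ℂ)‖ := by simp
  linarith

lemma contAt_J0 : ContinuousAt Jfun 0 := by
  rw [← continuousWithinAt_compl_self]
  have h1 : HasDerivAt (fun w : ℂ => (2 * Real.pi * Complex.I) * w) (2 * Real.pi * Complex.I) 0 := by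
    simpa using (hasDerivAt_id (0:ℂ)).const_mul (2 * Real.pi * Complex.I)
  have hd : HasDerivAt (fun w : ℂ => Complex.exp (2 * Real.pi * Complex.I * w) - 1)
      (2 * Real.pi * Complex.I) 0 := by
    simpa using (h1.cexp).sub_const 1
  have hs := hasDerivAt_iff_tendsto_slope.mp hd
  have h2 : Tendsto (fun w : ℂ => (Complex.exp (2 * Real.pi * Complex.I * w) - 1) / w)
      (nhdsWithin 0 {(0:ℂ)}ᶜ) (nhds (2 * Real.pi * Complex.I)) := by
    refine hs.congr fun w => ?_
    simp [slope_def_field]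
  have h3 := h2.inv₀ twoPiI_ne
  unfold ContinuousWithinAt
  rw [show Jfun 0 = (2 * Real.pi * Complex.I)⁻¹ from if_pos rfl]
  refine h3.congr' ?_
  filter_upwards [self_mem_nhdsWithin] with w hw
  simp only [Set.mem_compl_iff, Set.mem_singleton_iff] at hw
  rw [Jfun, if_neg hw, inv_div]

lemma contOn_J : ContinuousOn Jfun (Metric.ball 0 1) := by
  intro w hw
  rcases eq_or_ne w 0 with rfl | hw0
  · exact contAt_J0.continuousWithinAt
  · apply ContinuousAt.continuousWithinAt
    have hlt : ‖w‖ < 1 := by simpa using hw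
    have hne : Complex.exp (2 * Real.pi * Complex.I * w) - 1 ≠ 0 :=
      sub_ne_zero.mpr (exp_ne_one' hw0 hlt)
    have hc : ContinuousAt (fun u : ℂ => u / (Complex.exp (2 * Real.pi * Complex.I * u) - 1)) w := by
      exact ContinuousAt.div continuousAt_id
        (Continuous.continuousAt (by fun_prop)) hne
    refine hc.congr ?_
    filter_upwards [compl_singleton_mem_nhds hw0] with u hu
    simp only [Set.mem_compl_iff, Set.mem_singleton_iff] at hu
    rw [Jfun, if_neg hu]

lemma contOn_E : ContinuousOn Efun (Metric.ball 0 1) := by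
  apply ContinuousOn.mul ?_ contOn_J
  exact Continuous.continuousOn (by fun_prop)

lemma norm_w (r φ : ℝ) : ‖(r:ℂ) * Complex.exp (φ * Complex.I)‖ = |r| := by
  rw [norm_mul, Complex.norm_exp_ofReal_mul_I, mul_one, Complex.norm_real, Real.norm_eq_abs]

lemma integrand_eq (z : ℂ) {r φ : ℝ} (hr : 0 < r) (hr1 : r < 1)
    (hφ : φ ∈ Set.Ioc (-Real.pi) Real.pi) :
    (r:ℂ)^z * (fl z ((r:ℂ) * Complex.exp (φ * Complex.I)) *
      (Complex.I * r * Complex.exp (φ * Complex.I))) = Kf z r φ := by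
  set w : ℂ := (r:ℂ) * Complex.exp (φ * Complex.I) with hwdef
  have hw0 : w ≠ 0 := mul_ne_zero (Complex.ofReal_ne_zero.mpr hr.ne') (Complex.exp_ne_zero _)
  have hnormw : ‖w‖ = r := by rw [hwdef, norm_w, abs_of_pos hr]
  have harg : Complex.arg w = φ := by
    rw [hwdef, Complex.arg_real_mul _ hr, Complex.exp_mul_I, Complex.arg_cos_add_sin_mul_I hφ]
  have hlog : Complex.log w = (Real.log r : ℂ) + φ * Complex.I := by
    apply Complex.ext
    · simp [Complex.log_re, hnormw]
    · simp [Complex.log_im, harg]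
  have hcpow : w ^ (-z) = Complex.exp (Complex.log w * (-z)) := Complex.cpow_def_of_ne_zero hw0 _
  have hrz : (r:ℂ)^z = Complex.exp ((Real.log r : ℂ) * z) := by
    rw [Complex.cpow_def_of_ne_zero (Complex.ofReal_ne_zero.mpr hr.ne'),
      ← Complex.ofReal_log hr.le]
  have hzz : (r:ℂ)^z * w^(-z) = Complex.exp (-(Complex.I * z) * φ) := by
    rw [hrz, hcpow, hlog, ← Complex.exp_add]
    congr 1
    ring
  have hden : Complex.exp (Real.pi * Complex.I * w) - Complex.exp (-(Real.pi * Complex.I) * w)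
      = Complex.exp (-(Real.pi * Complex.I) * w) * (Complex.exp (2 * Real.pi * Complex.I * w) - 1) := by
    rw [mul_sub, mul_one, ← Complex.exp_add]
    congr 2
    ring
  have hD : Complex.exp (2 * Real.pi * Complex.I * w) - 1 ≠ 0 :=
    sub_ne_zero.mpr (exp_ne_one' hw0 (by rw [hnormw]; exact hr1))
  have hIw : Complex.I * (r:ℂ) * Complex.exp (φ * Complex.I) = Complex.I * w := by
    rw [hwdef]; ring
  have key : (r:ℂ)^z * (fl z w * (Complex.I * w))
      = ((r:ℂ)^z * w^(-z)) * (Complex.exp (-(Real.pi * Complex.I) * w ^ 2) *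
        Complex.exp (Real.pi * Complex.I * w) *
        (w / (Complex.exp (2 * Real.pi * Complex.I * w) - 1)) * Complex.I) := by
    unfold fl
    rw [hden, neg_mul (Real.pi * Complex.I : ℂ) w, Complex.exp_neg]
    field_simp
  rw [hIw, key, hzz]
  unfold Kf Efun Jfun
  rw [if_neg hw0, ← hwdef]
  ring

lemma arcL_eq (z : ℂ) {r : ℝ} (hr : 0 < r) (hr1 : r < 1) :
    (r:ℂ)^z * arcL z r = ∫ φ in (-(Real.pi / 4))..(3 * Real.pi / 4), Kf z r φ := by
  unfold arcL
  rw [← intervalIntegral.integral_const_mul]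
  apply intervalIntegral.integral_congr
  intro φ hφ
  have hle : -(Real.pi / 4) ≤ 3 * Real.pi / 4 := by linarith [Real.pi_pos]
  rw [Set.uIcc_of_le hle] at hφ
  have hφ' : φ ∈ Set.Ioc (-Real.pi) Real.pi :=
    ⟨by linarith [Real.pi_pos, hφ.1], by linarith [Real.pi_pos, hφ.2]⟩
  exact integrand_eq z hr hr1 hφ'

lemma tendsto_Kf (z : ℂ) :
    Tendsto (fun r : ℝ => ∫ φ in (-(Real.pi / 4))..(3 * Real.pi / 4), Kf z r φ)
      (nhdsWithin 0 (Set.Ioi 0))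
      (nhds (∫ φ in (-(Real.pi / 4))..(3 * Real.pi / 4), Kf z 0 φ)) := by
  obtain ⟨C, hC⟩ := (isCompact_closedBall (0:ℂ) (1/2)).exists_bound_of_continuousOn
    (contOn_E.mono (by intro x hx; simp at hx ⊢; linarith))
  have hmem : Set.Ioo (0:ℝ) (1/2) ∈ nhdsWithin 0 (Set.Ioi 0) :=
    Ioo_mem_nhdsGT_of_mem (by constructor <;> norm_num)
  apply intervalIntegral.tendsto_integral_filter_of_dominated_convergence
    (fun _ => Real.exp (‖z‖ * Real.pi) * C)
  · filter_upwards [hmem] with r hr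
    apply Continuous.aestronglyMeasurable
    unfold Kf
    apply Continuous.mul (by fun_prop)
    apply contOn_E.comp_continuous (by fun_prop)
    intro φ
    simp only [Metric.mem_ball, dist_zero_right]
    rw [norm_w]
    rw [abs_of_pos hr.1]; linarith [hr.2]
  · filter_upwards [hmem] with r hr
    apply MeasureTheory.ae_of_all
    intro φ hφ
    have hφ2 : |φ| ≤ Real.pi := by
      rw [Set.uIoc_of_le (by linarith [Real.pi_pos])] at hφ
      rw [abs_le]
      exact ⟨by linarith [Real.pi_pos, hφ.1], by linarith [Real.pi_pos, hφ.2]⟩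
    unfold Kf
    rw [norm_mul, norm_mul, Complex.norm_I, mul_one]
    have h1 : ‖Complex.exp (-(Complex.I * z) * (φ:ℂ))‖ ≤ Real.exp (‖z‖ * Real.pi) := by
      rw [Complex.norm_exp]
      apply Real.exp_le_exp.mpr
      calc (-(Complex.I * z) * (φ:ℂ)).re ≤ ‖-(Complex.I * z) * (φ:ℂ)‖ := Complex.re_le_norm _
        _ = ‖z‖ * |φ| := by
            rw [norm_mul, norm_neg, norm_mul, Complex.norm_I, one_mul, Complex.norm_real,
              Real.norm_eq_abs]
        _ ≤ ‖z‖ * Real.pi := by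
            apply mul_le_mul_of_nonneg_left hφ2 (norm_nonneg z)
    have h2 : ‖Efun ((r:ℂ) * Complex.exp ((φ:ℂ) * Complex.I))‖ ≤ C := by
      apply hC
      simp only [Metric.mem_closedBall, dist_zero_right]
      rw [norm_w, abs_of_pos hr.1]; linarith [hr.2]
    exact mul_le_mul h1 h2 (norm_nonneg _) (Real.exp_nonneg _)
  · exact intervalIntegrable_const
  · apply MeasureTheory.ae_of_all
    intro φ _
    unfold Kf
    apply Tendsto.mul tendsto_const_nhds
    have hE : ContinuousAt Efun 0 :=
      contOn_E.continuousAt (Metric.ball_mem_nhds 0 one_pos)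
    have hmap : Tendsto (fun r : ℝ => (r:ℂ) * Complex.exp ((φ:ℂ) * Complex.I))
        (nhdsWithin 0 (Set.Ioi 0)) (nhds 0) := by
      have hco : Continuous (fun r : ℝ => (r:ℂ) * Complex.exp ((φ:ℂ) * Complex.I)) := by fun_prop
      have h0 := hco.continuousAt (x := 0)
      rw [ContinuousAt] at h0
      simpa using h0.mono_left nhdsWithin_le_nhds
    have := hE.tendsto.comp hmap
    simpa [Function.comp_def] using this

lemma integral_K0 (z : ℂ) (hz : z ≠ 0) :
    (∫ φ in (-(Real.pi / 4))..(3 * Real.pi / 4), Kf z 0 φ)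
      = (Complex.exp (Complex.I * Real.pi * z / 4) -
          Complex.exp (-(3 * Complex.I * Real.pi * z) / 4)) / (2 * Real.pi * Complex.I * z) := by
  have hπ : ((Real.pi : ℝ) : ℂ) ≠ 0 := Complex.ofReal_ne_zero.mpr Real.pi_ne_zero
  have hE0 : Efun 0 = (2 * Real.pi * Complex.I)⁻¹ := by
    unfold Efun Jfun; simp
  have hc : -(Complex.I * z) ≠ 0 := by
    simp [Complex.I_ne_zero, hz]
  have step1 : (∫ φ in (-(Real.pi / 4))..(3 * Real.pi / 4), Kf z 0 φ)
      = ∫ φ in (-(Real.pi / 4))..(3 * Real.pi / 4),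
          Complex.exp (-(Complex.I * z) * φ) * (Complex.I * (2 * Real.pi * Complex.I)⁻¹) := by
    apply intervalIntegral.integral_congr
    intro φ _
    unfold Kf
    norm_num [hE0]
    ring
  rw [step1, intervalIntegral.integral_mul_const, integral_exp_mul_complex hc]
  rw [show -(Complex.I * z) * ((3 * Real.pi / 4 : ℝ) : ℂ)
        = -(3 * Complex.I * Real.pi * z) / 4 by push_cast; ring,
      show -(Complex.I * z) * ((-(Real.pi / 4) : ℝ) : ℂ)
        = Complex.I * Real.pi * z / 4 by push_cast; ring]
  field_simp
  ring

end aux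

/-- Paper's Lemma 3.2 (left arc C̃_lc): the arc integral of `f_l` diverges like
`r^(-Re z)` as `r → 0⁺`; more precisely `r^(Re z)·‖A_l(r)‖` tends to
`‖exp(iπz/4) - exp(-3iπz/4)‖/(2π‖z‖)`, a positive limit. -/
theorem fl_arc_singularity (z : ℂ) (h0 : 0 < z.re) (h1 : z.re < 1) :
    Tendsto (fun r : ℝ => r ^ z.re * ‖arcL z r‖)
      (nhdsWithin 0 (Set.Ioi 0))
      (nhds (‖Complex.exp (Complex.I * Real.pi * z / 4) -
          Complex.exp (-(3 * Complex.I * Real.pi * z) / 4)‖ / (2 * Real.pi * ‖z‖))) ∧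
    0 < ‖Complex.exp (Complex.I * Real.pi * z / 4) -
          Complex.exp (-(3 * Complex.I * Real.pi * z) / 4)‖ / (2 * Real.pi * ‖z‖) := by
  have hz : z ≠ 0 := by
    intro h; rw [h] at h0; simp at h0
  have hπ : ((Real.pi : ℝ) : ℂ) ≠ 0 := Complex.ofReal_ne_zero.mpr Real.pi_ne_zero
  constructor
  · have heq : ∀ᶠ r in nhdsWithin (0:ℝ) (Set.Ioi 0),
        r ^ z.re * ‖arcL z r‖ = ‖∫ φ in (-(Real.pi / 4))..(3 * Real.pi / 4), Kf z r φ‖ := by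
      filter_upwards [Ioo_mem_nhdsGT_of_mem (by constructor <;> norm_num :
        (0:ℝ) ∈ Set.Ico (0:ℝ) 1)] with r hr
      rw [← arcL_eq z hr.1 hr.2, norm_mul,
        Complex.norm_cpow_eq_rpow_re_of_pos hr.1]
    have T := (tendsto_Kf z).norm
    rw [integral_K0 z hz] at T
    have hnorm : ‖(Complex.exp (Complex.I * Real.pi * z / 4) -
          Complex.exp (-(3 * Complex.I * Real.pi * z) / 4)) / (2 * Real.pi * Complex.I * z)‖
        = ‖Complex.exp (Complex.I * Real.pi * z / 4) -
          Complex.exp (-(3 * Complex.I * Real.pi * z) / 4)‖ / (2 * Real.pi * ‖z‖) := by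
      rw [norm_div]
      congr 1
      simp [norm_mul, Complex.norm_I, Complex.norm_real, Real.norm_eq_abs,
        abs_of_pos Real.pi_pos]
    rw [hnorm] at T
    exact Tendsto.congr' (heq.mono fun r h => h.symm) T
  · have hnum : Complex.exp (Complex.I * Real.pi * z / 4) -
        Complex.exp (-(3 * Complex.I * Real.pi * z) / 4) ≠ 0 := by
      rw [sub_ne_zero]
      intro h
      have he1 : Complex.exp (Complex.I * Real.pi * z / 4 - -(3 * Complex.I * Real.pi * z) / 4)
          = 1 := by
        rw [Complex.exp_sub, h, div_self (Complex.exp_ne_zero _)]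
      have he2 : Complex.exp (Complex.I * Real.pi * z) = 1 := by
        rw [← he1]; congr 1; ring
      rw [Complex.exp_eq_one_iff] at he2
      obtain ⟨n, hn⟩ := he2
      have hz2 : z = 2 * n := by
        have h3 : ((Real.pi:ℂ) * Complex.I) * z = ((Real.pi:ℂ) * Complex.I) * (2 * n) := by
          linear_combination hn
        exact mul_left_cancel₀ (mul_ne_zero hπ Complex.I_ne_zero) h3
      have hre : z.re = 2 * (n:ℝ) := by rw [hz2]; simp
      rw [hre] at h0 h1
      have hn0 : (0:ℝ) < (n:ℝ) := by linarith
      have hn1 : (1:ℤ) ≤ n := by exact_mod_cast hn0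
      have : (1:ℝ) ≤ (n:ℝ) := by exact_mod_cast hn1
      linarith
    apply div_pos (norm_pos_iff.mpr hnum)
    have : 0 < ‖z‖ := norm_pos_iff.mpr hz
    positivity
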